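/- Let J be an abelian topological monoid, X a topological vector space over ℂ, and φ ∈ P^n(J,X). Then φ = Σ_{j=0}^{n} a_j, where each a_j ∈ P^j(J,X) and each a_j is homogeneous of degree j in the sense that a_j(m•t) = m^j • a_j(t) for every integer m ≥ 1 and every t ∈ J. -/

import Mathlib

open scoped BigOperators

/-- Forward difference operator: `delta h f t = f (t + h) - f t`. -/
def delta {J X : Type*} [Add J] [Sub X] (h : J) (f : J → X) : J → X :=
  fun t => f (t + h) - f t

section basics

variable {J X : Type*} [AddCommMonoid J] [AddCommGroup X]

lemma delta_zero_fn (h : J) : delta h (0 : J → X) = 0 := by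
  funext t; simp [delta]

lemma iterate_delta_zero (h : J) (p : ℕ) : (delta h)^[p] (0 : J → X) = 0 :=
  Function.iterate_fixed (delta_zero_fn h) p

lemma delta_comm (g h : J) (f : J → X) : delta g (delta h f) = delta h (delta g f) := by
  funext t
  simp only [delta]
  rw [add_right_comm]
  abel

lemma delta_commute (g h : J) :
    Function.Commute (delta g (X := X)) (delta h) := by
  intro f; exact delta_comm g h f

lemma iterate_delta_comm (g h : J) (p q : ℕ) (f : J → X) :
    (delta g)^[p] ((delta h)^[q] f) = (delta h)^[q] ((delta g)^[p] f) := by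
  exact ((delta_commute g h (X := X)).iterate_iterate p q) f

lemma delta_finset_sum {ι : Type*} (h : J) (T : Finset ι) (F : ι → J → X) :
    delta h (fun t => ∑ j ∈ T, F j t) = fun t => ∑ j ∈ T, delta h (F j) t := by
  funext t
  simp [delta, Finset.sum_sub_distrib]

lemma iterate_delta_finset_sum {ι : Type*} (h : J) (p : ℕ) (T : Finset ι) (F : ι → J → X) :
    (delta h)^[p] (fun t => ∑ j ∈ T, F j t) = fun t => ∑ j ∈ T, (delta h)^[p] (F j) t := by
  induction p generalizing F with
  | zero => simp
  | succ p ih =>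
      rw [Function.iterate_succ_apply, delta_finset_sum]
      rw [ih (fun j => delta h (F j))]
      funext t
      congr 1

lemma pullback (f : J → X) (s h : J) (j : ℕ) :
    ∀ i : ℕ, (delta h)^[j] f (s + i • h) = (delta (1 : ℕ))^[j] (fun r : ℕ => f (s + r • h)) i := by
  induction j with
  | zero => intro i; simp
  | succ j ih =>
      intro i
      rw [Function.iterate_succ_apply', Function.iterate_succ_apply']
      simp only [delta]
      rw [← ih, ← ih]
      congr 2
      rw [add_assoc, succ_nsmul]

end basics

section natside

variable {X : Type*} [AddCommGroup X] [Module ℂ X]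
set_option linter.unusedSectionVars false

lemma nat_newton (q : ℕ) : ∀ (g : ℕ → X),
    g q = ∑ j ∈ Finset.range (q + 1), (q.choose j) • ((delta (1 : ℕ))^[j] g 0) := by
  induction q with
  | zero => intro g; simp
  | succ q ih =>
      intro g
      have h1 : g (q + 1) = g q + (delta (1 : ℕ) g) q := by
        simp [delta]
      rw [h1, ih g, ih (delta (1 : ℕ) g)]
      have h2 : ∀ j : ℕ, (delta (1 : ℕ))^[j] (delta (1 : ℕ) g) 0
          = (delta (1 : ℕ))^[j + 1] g 0 := by
        intro j; rw [Function.iterate_succ_apply]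
      simp only [h2]
      rw [Finset.sum_range_succ' (fun j => (q + 1).choose j • (delta (1:ℕ))^[j] g 0) (q + 1)]
      simp only [Nat.choose_succ_succ, add_smul]
      rw [Finset.sum_add_distrib]
      have h3 : ∑ j ∈ Finset.range (q + 1), q.choose (j + 1) • (delta (1:ℕ))^[j + 1] g 0
          = ∑ j ∈ Finset.range q, q.choose (j + 1) • (delta (1:ℕ))^[j + 1] g 0 := by
        rw [Finset.sum_range_succ]
        simp
      have h4 : ∑ j ∈ Finset.range (q + 1), q.choose j • (delta (1:ℕ))^[j] g 0
          = ∑ j ∈ Finset.range q, q.choose (j + 1) • (delta (1:ℕ))^[j+1] g 0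
            + q.choose 0 • (delta (1:ℕ))^[0] g 0 := by
        rw [Finset.sum_range_succ' (fun j => q.choose j • (delta (1:ℕ))^[j] g 0) q]
      rw [h3, h4]
      simp only [Nat.choose_zero_right, Function.iterate_zero, id_eq, one_smul]
      abel

lemma nat_newton_trunc (n : ℕ) (g : ℕ → X) (hg : (delta (1 : ℕ))^[n + 1] g = 0) (q : ℕ) :
    g q = ∑ j ∈ Finset.range (n + 1), (q.choose j) • ((delta (1 : ℕ))^[j] g 0) := by
  have hzero : ∀ j : ℕ, n + 1 ≤ j → (delta (1 : ℕ))^[j] g 0 = 0 := by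
    intro j hj
    have : j = (j - (n + 1)) + (n + 1) := (Nat.sub_add_cancel hj).symm
    rw [this, Function.iterate_add_apply, hg, iterate_delta_zero]
    simp
  rw [nat_newton q g]
  have hsub1 : Finset.range (q + 1) ⊆ Finset.range (q + n + 2) := by
    intro x hx; simp at hx ⊢; omega
  have hsub2 : Finset.range (n + 1) ⊆ Finset.range (q + n + 2) := by
    intro x hx; simp at hx ⊢; omega
  rw [Finset.sum_subset hsub1 (fun x _ hx => by
    have : q < x := by simp at hx; omega
    rw [Nat.choose_eq_zero_of_lt this, zero_smul])]
  rw [Finset.sum_subset hsub2 (fun x _ hx => by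
    have : n + 1 ≤ x := by simp at hx; omega
    rw [hzero x this, smul_zero])]

lemma monomial_delta_vanish : ∀ (k b : ℕ), b ≤ k → ∀ (c : X),
    (delta (1 : ℕ))^[k + 1] (fun i : ℕ => ((i : ℂ)) ^ b • c) = 0 := by
  intro k
  induction k with
  | zero =>
      intro b hb c
      interval_cases b
      funext i
      simp [delta]
  | succ k ih =>
      intro b hb c
      rw [Function.iterate_succ_apply]
      have hdel : delta (1 : ℕ) (fun i : ℕ => ((i : ℂ)) ^ b • c)
          = fun i : ℕ => ∑ j ∈ Finset.range b, ((i : ℂ)) ^ j • ((b.choose j : ℂ) • c) := by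
        funext i
        simp only [delta]
        rw [← sub_smul]
        have hpow : ((i + 1 : ℕ) : ℂ) ^ b - (i : ℂ) ^ b
            = ∑ j ∈ Finset.range b, (i : ℂ) ^ j * (b.choose j : ℂ) := by
          push_cast
          rw [add_pow]
          rw [Finset.sum_range_succ]
          simp [mul_comm]
        rw [hpow, Finset.sum_smul]
        congr 1; funext j
        rw [mul_smul]
      rw [hdel, iterate_delta_finset_sum]
      funext i
      have : ∀ j ∈ Finset.range b,
          (delta (1:ℕ))^[k + 1] (fun i : ℕ => ((i : ℂ)) ^ j • ((b.choose j : ℂ) • c)) i = 0 := by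
        intro j hj
        have hj' : j ≤ k := by
          simp at hj; omega
        rw [ih j hj' _]
        rfl
      rw [Finset.sum_congr rfl this]
      simp

lemma poly_delta_vanish (k : ℕ) (c : ℕ → X) :
    (delta (1 : ℕ))^[k + 1] (fun i : ℕ => ∑ b ∈ Finset.range (k + 1), ((i : ℂ)) ^ b • c b) = 0 := by
  rw [iterate_delta_finset_sum]
  funext i
  have : ∀ b ∈ Finset.range (k + 1),
      (delta (1:ℕ))^[k + 1] (fun i : ℕ => ((i : ℂ)) ^ b • c b) i = 0 := by
    intro b hb
    rw [monomial_delta_vanish k b (by simp at hb; omega) (c b)]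
    rfl
  rw [Finset.sum_congr rfl this]
  simp

end natside

noncomputable def betaC (j b : ℕ) : ℂ := (descPochhammer ℂ j).coeff b / (j.factorial : ℂ)

lemma betaC_eq_zero {j b : ℕ} (hb : j < b) : betaC j b = 0 := by
  unfold betaC
  rw [Polynomial.coeff_eq_zero_of_natDegree_lt, zero_div]
  rwa [descPochhammer_natDegree]

lemma choose_cast_eq (j q : ℕ) :
    ((q.choose j : ℕ) : ℂ) = ∑ b ∈ Finset.range (j + 1), betaC j b * (q : ℂ) ^ b := by
  have h1 : (descPochhammer ℂ j).eval (q : ℂ) = ((q.descFactorial j : ℕ) : ℂ) := by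
    rw [descPochhammer_eval_eq_descFactorial]
  have h2 : (descPochhammer ℂ j).eval (q : ℂ)
      = ∑ b ∈ Finset.range (j + 1), (descPochhammer ℂ j).coeff b * (q : ℂ) ^ b := by
    apply Polynomial.eval_eq_sum_range'
    rw [descPochhammer_natDegree]; omega
  have h3 : ((q.descFactorial j : ℕ) : ℂ) = (j.factorial : ℂ) * (q.choose j : ℂ) := by
    rw [Nat.descFactorial_eq_factorial_mul_choose]; push_cast; ring
  have hfac : (j.factorial : ℂ) ≠ 0 := by
    exact_mod_cast Nat.factorial_ne_zero j
  unfold betaC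
  simp only [div_mul_eq_mul_div]
  rw [← Finset.sum_div, ← h2, h1, h3, mul_comm, mul_div_assoc, div_self hfac, mul_one]

lemma choose_cast_eq' {j : ℕ} (M : ℕ) (hj : j < M) (q : ℕ) :
    ((q.choose j : ℕ) : ℂ) = ∑ b ∈ Finset.range M, betaC j b * (q : ℂ) ^ b := by
  rw [choose_cast_eq j q]
  apply Finset.sum_subset
  · intro x hx; simp at hx ⊢; omega
  · intro x _ hx
    have : j < x := by simp at hx; omega
    rw [betaC_eq_zero this, zero_mul]

section rep

variable {J X : Type*} [AddCommMonoid J] [AddCommGroup X] [Module ℂ X]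

/-- Newton representation with monomial coefficients along one direction. -/
lemma monoRep (n : ℕ) (f : J → X) (hf : ∀ g : J, (delta g)^[n + 1] f = 0) (x s : J) (m : ℕ) :
    f (x + m • s) = ∑ b ∈ Finset.range (n + 1), ((m : ℂ)) ^ b •
      (∑ j ∈ Finset.range (n + 1), betaC j b • ((delta s)^[j] f x)) := by
  set g : ℕ → X := fun r => f (x + r • s) with hg
  have hg0 : (delta (1 : ℕ))^[n + 1] g = 0 := by
    funext i
    rw [← pullback f x s (n + 1) i, hf s]
    rfl
  have hD : ∀ j : ℕ, (delta (1 : ℕ))^[j] g 0 = (delta s)^[j] f x := by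
    intro j
    rw [← pullback f x s j 0]
    simp
  have h1 : f (x + m • s) = ∑ j ∈ Finset.range (n + 1), (m.choose j) • ((delta s)^[j] f x) := by
    have := nat_newton_trunc n g hg0 m
    simpa only [hD] using this
  rw [h1]
  have h2 : ∀ j ∈ Finset.range (n + 1), (m.choose j) • ((delta s)^[j] f x)
      = ∑ b ∈ Finset.range (n + 1), (betaC j b * (m : ℂ) ^ b) • ((delta s)^[j] f x) := by
    intro j hj
    rw [← Finset.sum_smul, ← choose_cast_eq' (n + 1) (by simpa using hj) m,
      Nat.cast_smul_eq_nsmul]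
  rw [Finset.sum_congr rfl h2, Finset.sum_comm]
  congr 1; funext b
  rw [Finset.smul_sum]
  congr 1; funext j
  rw [mul_comm, mul_smul]

/-- Two-direction monomial representation. -/
lemma twoRep (n : ℕ) (f : J → X) (hf : ∀ g : J, (delta g)^[n + 1] f = 0) (s h : J) :
    ∃ x : ℕ → ℕ → X, ∀ m q : ℕ, f (m • s + q • h) =
      ∑ a ∈ Finset.range (n + 1), ∑ b ∈ Finset.range (n + 1),
        (((m : ℂ)) ^ a * ((q : ℂ)) ^ b) • x a b := by
  classical
  set ψ : ℕ → J → X := fun j => (delta h)^[j] f with hψ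
  have hψf : ∀ j g, (delta g)^[n + 1] (ψ j) = 0 := by
    intro j g
    show (delta g)^[n+1] ((delta h)^[j] f) = 0
    rw [iterate_delta_comm, hf g, iterate_delta_zero]
  set v : ℕ → ℕ → X := fun j a =>
    ∑ j' ∈ Finset.range (n + 1), betaC j' a • ((delta s)^[j'] (ψ j) 0) with hv
  have hψm : ∀ j (m : ℕ), ψ j (m • s) = ∑ a ∈ Finset.range (n + 1), ((m : ℂ)) ^ a • v j a := by
    intro j m
    have := monoRep n (ψ j) (hψf j) 0 s m
    rwa [zero_add] at this
  refine ⟨fun a b => ∑ j ∈ Finset.range (n + 1), betaC j b • v j a, ?_⟩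
  intro m q
  have h1 := monoRep n f hf (m • s) h q
  have h2 : ∀ j : ℕ, (delta h)^[j] f (m • s) = ψ j (m • s) := fun _ => rfl
  rw [h1]
  have h3 : ∀ b ∈ Finset.range (n + 1),
      ((q : ℂ)) ^ b • (∑ j ∈ Finset.range (n + 1), betaC j b • ((delta h)^[j] f (m • s)))
      = ∑ a ∈ Finset.range (n + 1), ∑ j ∈ Finset.range (n + 1),
          (((m : ℂ)) ^ a * ((q : ℂ)) ^ b) • (betaC j b • v j a) := by
    intro b _
    rw [Finset.sum_congr rfl (fun j _ => by rw [h2 j, hψm j m, Finset.smul_sum])]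
    rw [Finset.sum_comm, Finset.smul_sum]
    congr 1; funext a
    rw [Finset.smul_sum]
    congr 1; funext j
    rw [smul_smul, smul_smul, smul_smul]
    congr 1
    ring
  rw [Finset.sum_congr rfl h3, Finset.sum_comm]
  congr 1; funext a
  congr 1; funext b
  rw [Finset.smul_sum]

end rep

/-- `f : J → X` is a (continuous) polynomial of degree at most `n`,
i.e. `f ∈ P^n(J, X)`. -/
def IsPolyDeg {J X : Type*} [Add J] [Sub X] [Zero X] [TopologicalSpace J] [TopologicalSpace X]
    (n : ℕ) (f : J → X) : Prop :=
  Continuous f ∧ ∀ h : J, (delta h)^[n + 1] f = 0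

theorem polynomial_decomposition_into_homogeneous_parts
    {J X : Type*} [AddCommMonoid J] [TopologicalSpace J] [ContinuousAdd J]
    [AddCommGroup X] [Module ℂ X] [TopologicalSpace X] [IsTopologicalAddGroup X]
    [ContinuousSMul ℂ X]
    (n : ℕ) (φ : J → X) (hφ : IsPolyDeg n φ) :
    ∃ a : ℕ → J → X,
      (∀ j ≤ n, IsPolyDeg j (a j)) ∧
      (∀ j ≤ n, ∀ m : ℕ, 1 ≤ m → ∀ t : J, a j (m • t) = ((m : ℂ) ^ j) • a j t) ∧
      (∀ t : J, φ t = ∑ j ∈ Finset.range (n + 1), a j t) := by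
  classical
  obtain ⟨hcont, hΔ⟩ := hφ
  set N : ℕ := 2 * n + 2 with hN
  set v : Fin N → ℂ := fun m => ((m : ℕ) : ℂ) with hv
  have hvinj : Function.Injective v := by
    intro p q hpq
    simp only [hv] at hpq
    exact Fin.ext (by exact_mod_cast hpq)
  have hdet : (Matrix.vandermonde v).det ≠ 0 := Matrix.det_vandermonde_ne_zero_iff.mpr hvinj
  set W := (Matrix.vandermonde v)⁻¹ with hW
  have hWV : W * Matrix.vandermonde v = 1 :=
    Matrix.nonsing_inv_mul _ (isUnit_iff_ne_zero.mpr hdet)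
  have key : ∀ (k : ℕ) (hk : k < N) (b : ℕ) (hb : b < N),
      ∑ m' : Fin N, W ⟨k, hk⟩ m' * (((m' : ℕ) : ℂ)) ^ b = if k = b then 1 else 0 := by
    intro k hk b hb
    have h0 := congrArg (fun M => M ⟨k, hk⟩ ⟨b, hb⟩) hWV
    simp only [Matrix.mul_apply, Matrix.vandermonde_apply, Matrix.one_apply, hv] at h0
    simpa [Fin.ext_iff] using h0
  set a : ℕ → J → X := fun k t =>
    if hk : k < N then ∑ m' : Fin N, W ⟨k, hk⟩ m' • φ ((m' : ℕ) • t) else 0 with ha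
  have ha_eq : ∀ (k : ℕ) (hk : k < N) (t : J),
      a k t = ∑ m' : Fin N, W ⟨k, hk⟩ m' • φ ((m' : ℕ) • t) := by
    intro k hk t
    simp only [ha, dif_pos hk]
  set Y : J → ℕ → X := fun t b =>
    ∑ j ∈ Finset.range (n + 1), betaC j b • ((delta t)^[j] φ 0) with hY
  have hYrep : ∀ (t : J) (r : ℕ),
      φ (r • t) = ∑ b ∈ Finset.range (n + 1), ((r : ℂ)) ^ b • Y t b := by
    intro t r
    have := monoRep n φ hΔ 0 t r
    rwa [zero_add] at this
  -- evaluation of `a k` on dilates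
  have haY : ∀ (k : ℕ), k ≤ n → ∀ (t : J) (m : ℕ),
      a k (m • t) = ((m : ℂ)) ^ k • Y t k := by
    intro k hk t m
    have hkN : k < N := by omega
    rw [ha_eq k hkN]
    have step1 : ∀ m' : Fin N, W ⟨k, hkN⟩ m' • φ ((m' : ℕ) • (m • t))
        = ∑ b ∈ Finset.range (n + 1),
            ((W ⟨k, hkN⟩ m' * ((m' : ℕ) : ℂ) ^ b) * ((m : ℂ)) ^ b) • Y t b := by
      intro m'
      rw [smul_smul (m' : ℕ) m t, hYrep t ((m' : ℕ) * m), Finset.smul_sum]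
      refine Finset.sum_congr rfl (fun b _ => ?_)
      rw [smul_smul]
      congr 1
      push_cast
      rw [mul_pow]
      ring
    rw [Finset.sum_congr rfl (fun m' _ => step1 m'), Finset.sum_comm]
    have step2 : ∀ b ∈ Finset.range (n + 1),
        (∑ m' : Fin N, ((W ⟨k, hkN⟩ m' * ((m' : ℕ) : ℂ) ^ b) * ((m : ℂ)) ^ b) • Y t b)
        = (if k = b then ((m : ℂ)) ^ b • Y t b else 0) := by
      intro b hb
      have hbN : b < N := by simp at hb; omega
      rw [← Finset.sum_smul, ← Finset.sum_mul, key k hkN b hbN]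
      split
      · rw [one_mul]
      · rw [zero_mul, zero_smul]
    rw [Finset.sum_congr rfl step2, Finset.sum_ite_eq, if_pos (by simp; omega)]
  have haYt : ∀ (k : ℕ), k ≤ n → ∀ t : J, a k t = Y t k := by
    intro k hk t
    have := haY k hk t 1
    rwa [one_nsmul, Nat.cast_one, one_pow, one_smul] at this
  refine ⟨a, ?_, ?_, ?_⟩
  · -- degree and continuity
    intro k hk
    have hkN : k < N := by omega
    constructor
    · have : a k = fun t => ∑ m' : Fin N, W ⟨k, hkN⟩ m' • φ ((m' : ℕ) • t) :=
        funext (ha_eq k hkN)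
      rw [this]
      exact continuous_finset_sum _ (fun m' _ =>
        (hcont.comp (continuous_nsmul (M := J) (m' : ℕ))).const_smul _)
    · intro h
      funext s
      obtain ⟨x, hx⟩ := twoRep n φ hΔ s h
      set z : ℕ → X := fun b =>
        ∑ a' ∈ Finset.range (n + 1), if k = a' + b then x a' b else 0 with hz
      have hz0 : ∀ b : ℕ, k < b → z b = 0 := by
        intro b hb
        simp only [hz]
        refine Finset.sum_eq_zero (fun a' _ => ?_)
        rw [if_neg (by omega)]
      have heval : ∀ i : ℕ, a k (s + i • h)
          = ∑ b ∈ Finset.range (k + 1), ((i : ℂ)) ^ b • z b := by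
        intro i
        rw [ha_eq k hkN]
        have step1 : ∀ m' : Fin N, W ⟨k, hkN⟩ m' • φ ((m' : ℕ) • (s + i • h))
            = ∑ a' ∈ Finset.range (n + 1), ∑ b ∈ Finset.range (n + 1),
                ((W ⟨k, hkN⟩ m' * ((m' : ℕ) : ℂ) ^ (a' + b)) * ((i : ℂ)) ^ b) • x a' b := by
          intro m'
          rw [smul_add, smul_smul (m' : ℕ) i h, hx (m' : ℕ) ((m' : ℕ) * i), Finset.smul_sum]
          refine Finset.sum_congr rfl (fun a' _ => ?_)
          rw [Finset.smul_sum]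
          refine Finset.sum_congr rfl (fun b _ => ?_)
          rw [smul_smul]
          congr 1
          push_cast
          rw [mul_pow, pow_add]
          ring
        rw [Finset.sum_congr rfl (fun m' _ => step1 m'), Finset.sum_comm]
        have step2 : ∀ a' ∈ Finset.range (n + 1),
            (∑ m' : Fin N, ∑ b ∈ Finset.range (n + 1),
              ((W ⟨k, hkN⟩ m' * ((m' : ℕ) : ℂ) ^ (a' + b)) * ((i : ℂ)) ^ b) • x a' b)
            = ∑ b ∈ Finset.range (n + 1),
                ((i : ℂ)) ^ b • (if k = a' + b then x a' b else 0) := by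
          intro a' ha'
          rw [Finset.sum_comm]
          refine Finset.sum_congr rfl (fun b hb => ?_)
          have hbN : a' + b < N := by simp at ha' hb; omega
          rw [← Finset.sum_smul, ← Finset.sum_mul, key k hkN (a' + b) hbN]
          split
          · rw [one_mul]
          · rw [zero_mul, zero_smul, smul_zero]
        rw [Finset.sum_congr rfl step2, Finset.sum_comm]
        have step3 : ∀ b ∈ Finset.range (n + 1),
            (∑ a' ∈ Finset.range (n + 1), ((i : ℂ)) ^ b • (if k = a' + b then x a' b else 0))
            = ((i : ℂ)) ^ b • z b := by
          intro b _
          rw [← Finset.smul_sum]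
        rw [Finset.sum_congr rfl step3]
        symm
        apply Finset.sum_subset
        · intro b hb
          simp at hb ⊢; omega
        · intro b hb1 hb2
          have hkb : k < b := by simp at hb1 hb2; omega
          rw [hz0 b hkb, smul_zero]
      have h0 : (delta h)^[k + 1] (a k) s
          = (delta (1 : ℕ))^[k + 1] (fun i : ℕ => a k (s + i • h)) 0 := by
        have hp := pullback (a k) s h (k + 1) 0
        simpa using hp
      show (delta h)^[k + 1] (a k) s = 0
      rw [h0, show (fun i : ℕ => a k (s + i • h))
          = (fun i : ℕ => ∑ b ∈ Finset.range (k + 1), ((i : ℂ)) ^ b • z b) from funext heval,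
        poly_delta_vanish k z]
      rfl
  · intro j hj m hm t
    rw [haY j hj t m, haYt j hj t]
  · intro t
    have h1 := hYrep t 1
    rw [one_nsmul] at h1
    rw [h1]
    refine Finset.sum_congr rfl (fun b hb => ?_)
    rw [Nat.cast_one, one_pow, one_smul, haYt b (by simp at hb; omega) t]
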